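/- (Telescoping performance difference) Let M and M̂ be two MDPs on finite state space S and action space A, identical except for transitions P and P̂, with the same reward r bounded by |r| ≤ R_max, discount γ ∈ [0,1), same initial distribution. For any policy π, let η_M(π) denote the discounted return of π in M, V^π_M the value function in M, and ρ̂ the normalized discounted state-action occupancy of π in M̂. Then η_M(π) − η_{M̂}(π) = (γ/(1−γ)) · E_{(s,a)~ρ̂}[ Σ_{s'} (P(s'|s,a) − P̂(s'|s,a)) V^π_M(s') ]. -/

import Mathlib

open Finset

/-- One-step evolution of a state-action distribution under kernel `P` and policy `pol`. -/
noncomputable def stepDist {S A : Type*} [Fintype S] [Fintype A]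
    (P : S → A → S → ℝ) (pol : S → A → ℝ) (d : S → A → ℝ) : S → A → ℝ :=
  fun s' a' => (∑ s, ∑ a, d s a * P s a s') * pol s' a'

/-- State-action distribution at time `t` when starting from `ρ0` and following `pol` in `P`. -/
noncomputable def traj {S A : Type*} [Fintype S] [Fintype A]
    (P : S → A → S → ℝ) (pol : S → A → ℝ) (ρ0 : S → ℝ) : ℕ → S → A → ℝ :=
  fun t => (stepDist P pol)^[t] (fun s a => ρ0 s * pol s a)

/-- Discounted return `η_M(π)` of policy `pol` in the MDP with kernel `P`. -/
noncomputable def ret {S A : Type*} [Fintype S] [Fintype A]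
    (P : S → A → S → ℝ) (pol : S → A → ℝ) (ρ0 : S → ℝ) (r : S → A → ℝ) (γ : ℝ) : ℝ :=
  ∑' t : ℕ, γ ^ t * ∑ s, ∑ a, traj P pol ρ0 t s a * r s a

/-- Value function `V^π_M(s)`. -/
noncomputable def Vf {S A : Type*} [Fintype S] [Fintype A] [DecidableEq S]
    (P : S → A → S → ℝ) (pol : S → A → ℝ) (r : S → A → ℝ) (γ : ℝ) (s0 : S) : ℝ :=
  ret P pol (fun s => if s = s0 then 1 else 0) r γ

/-- Normalized discounted state-action occupancy `ρ̂(s,a)` of `pol` in kernel `P`. -/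
noncomputable def occ {S A : Type*} [Fintype S] [Fintype A]
    (P : S → A → S → ℝ) (pol : S → A → ℝ) (ρ0 : S → ℝ) (γ : ℝ) : S → A → ℝ :=
  fun s a => (1 - γ) * ∑' t : ℕ, γ ^ t * traj P pol ρ0 t s a

section aux
variable {S A : Type*} [Fintype S] [Fintype A]

noncomputable def inn (d w : S → A → ℝ) : ℝ := ∑ s, ∑ a, d s a * w s a
noncomputable def nrm (d : S → A → ℝ) : ℝ := ∑ s, ∑ a, |d s a|

noncomputable def Gf (P : S → A → S → ℝ) (pol : S → A → ℝ) (w : S → A → ℝ) (γ : ℝ)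
    (d : S → A → ℝ) : ℝ := ∑' t : ℕ, γ ^ t * inn ((stepDist P pol)^[t] d) w

lemma nrm_nonneg (d : S → A → ℝ) : 0 ≤ nrm d :=
  Finset.sum_nonneg fun _ _ => Finset.sum_nonneg fun _ _ => abs_nonneg _

lemma abs_le_nrm (d : S → A → ℝ) (s : S) (a : A) : |d s a| ≤ nrm d := by
  calc |d s a| ≤ ∑ a, |d s a| :=
        Finset.single_le_sum (f := fun a => |d s a|) (fun _ _ => abs_nonneg _) (mem_univ a)
    _ ≤ nrm d :=
        Finset.single_le_sum (f := fun s => ∑ a, |d s a|)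
          (fun _ _ => Finset.sum_nonneg fun _ _ => abs_nonneg _) (mem_univ s)

lemma inn_abs_le {w : S → A → ℝ} {B : ℝ} (hB : ∀ s a, |w s a| ≤ B) (d : S → A → ℝ) :
    |inn d w| ≤ B * nrm d := by
  calc |inn d w| ≤ ∑ s, |∑ a, d s a * w s a| := Finset.abs_sum_le_sum_abs _ _
    _ ≤ ∑ s, ∑ a, |d s a * w s a| :=
        Finset.sum_le_sum fun s _ => Finset.abs_sum_le_sum_abs _ _
    _ ≤ ∑ s, ∑ a, |d s a| * B := by
        refine Finset.sum_le_sum fun s _ => Finset.sum_le_sum fun a _ => ?_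
        rw [abs_mul]
        exact mul_le_mul_of_nonneg_left (hB s a) (abs_nonneg _)
    _ = B * nrm d := by
        simp only [nrm, Finset.mul_sum]
        exact Finset.sum_congr rfl fun s _ => Finset.sum_congr rfl fun a _ => mul_comm _ _

variable (P : S → A → S → ℝ) (pol : S → A → ℝ)

lemma nrm_step (hP : ∀ s a s', 0 ≤ P s a s') (hPsum : ∀ s a, ∑ s', P s a s' = 1)
    (hpol : ∀ s a, 0 ≤ pol s a) (hpolsum : ∀ s, ∑ a, pol s a = 1) (d : S → A → ℝ) :
    nrm (stepDist P pol d) ≤ nrm d := by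
  have h1 : ∀ s' a', |stepDist P pol d s' a'| ≤ (∑ s, ∑ a, |d s a| * P s a s') * pol s' a' := by
    intro s' a'
    rw [stepDist, abs_mul, abs_of_nonneg (hpol s' a')]
    refine mul_le_mul_of_nonneg_right ?_ (hpol s' a')
    calc |∑ s, ∑ a, d s a * P s a s'| ≤ ∑ s, |∑ a, d s a * P s a s'| :=
          Finset.abs_sum_le_sum_abs _ _
      _ ≤ ∑ s, ∑ a, |d s a * P s a s'| :=
          Finset.sum_le_sum fun s _ => Finset.abs_sum_le_sum_abs _ _
      _ = ∑ s, ∑ a, |d s a| * P s a s' := by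
          refine Finset.sum_congr rfl fun s _ => Finset.sum_congr rfl fun a _ => ?_
          rw [abs_mul, abs_of_nonneg (hP s a s')]
  calc nrm (stepDist P pol d)
      ≤ ∑ s', ∑ a', (∑ s, ∑ a, |d s a| * P s a s') * pol s' a' :=
        Finset.sum_le_sum fun s' _ => Finset.sum_le_sum fun a' _ => h1 s' a'
    _ = ∑ s', ∑ s, ∑ a, |d s a| * P s a s' := by
        refine Finset.sum_congr rfl fun s' _ => ?_
        rw [← Finset.mul_sum, hpolsum, mul_one]
    _ = nrm d := by
        rw [Finset.sum_comm]
        refine Finset.sum_congr rfl fun s _ => ?_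
        rw [Finset.sum_comm]
        refine Finset.sum_congr rfl fun a _ => ?_
        rw [← Finset.mul_sum, hPsum, mul_one]

lemma nrm_iter (hP : ∀ s a s', 0 ≤ P s a s') (hPsum : ∀ s a, ∑ s', P s a s' = 1)
    (hpol : ∀ s a, 0 ≤ pol s a) (hpolsum : ∀ s, ∑ a, pol s a = 1) (d : S → A → ℝ) (t : ℕ) :
    nrm ((stepDist P pol)^[t] d) ≤ nrm d := by
  induction t with
  | zero => simp
  | succ n ih =>
      rw [Function.iterate_succ_apply']
      exact (nrm_step P pol hP hPsum hpol hpolsum _).trans ih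

variable {γ : ℝ}

lemma summable_G (hγ0 : 0 ≤ γ) (hγ1 : γ < 1)
    (hP : ∀ s a s', 0 ≤ P s a s') (hPsum : ∀ s a, ∑ s', P s a s' = 1)
    (hpol : ∀ s a, 0 ≤ pol s a) (hpolsum : ∀ s, ∑ a, pol s a = 1)
    {w : S → A → ℝ} {B : ℝ} (hB0 : 0 ≤ B) (hB : ∀ s a, |w s a| ≤ B) (d : S → A → ℝ) :
    Summable (fun t : ℕ => γ ^ t * inn ((stepDist P pol)^[t] d) w) := by
  refine Summable.of_norm_bounded (g := fun t => (B * nrm d) * γ ^ t)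
    ((summable_geometric_of_lt_one hγ0 hγ1).mul_left _) fun t => ?_
  rw [Real.norm_eq_abs, abs_mul, abs_pow, abs_of_nonneg hγ0, mul_comm]
  refine mul_le_mul_of_nonneg_right ?_ (pow_nonneg hγ0 t)
  exact (inn_abs_le hB _).trans
    (mul_le_mul_of_nonneg_left (nrm_iter P pol hP hPsum hpol hpolsum d t) hB0)

lemma G_abs_le (hγ0 : 0 ≤ γ) (hγ1 : γ < 1)
    (hP : ∀ s a s', 0 ≤ P s a s') (hPsum : ∀ s a, ∑ s', P s a s' = 1)
    (hpol : ∀ s a, 0 ≤ pol s a) (hpolsum : ∀ s, ∑ a, pol s a = 1)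
    {w : S → A → ℝ} {B : ℝ} (hB0 : 0 ≤ B) (hB : ∀ s a, |w s a| ≤ B) (d : S → A → ℝ) :
    |Gf P pol w γ d| ≤ (B * nrm d) * (1 - γ)⁻¹ := by
  have hgeo : Summable (fun t : ℕ => (B * nrm d) * γ ^ t) :=
    (summable_geometric_of_lt_one hγ0 hγ1).mul_left _
  have key : ∀ t : ℕ, |γ ^ t * inn ((stepDist P pol)^[t] d) w| ≤ (B * nrm d) * γ ^ t := by
    intro t
    rw [abs_mul, abs_pow, abs_of_nonneg hγ0, mul_comm]
    refine mul_le_mul_of_nonneg_right ?_ (pow_nonneg hγ0 t)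
    exact (inn_abs_le hB _).trans
      (mul_le_mul_of_nonneg_left (nrm_iter P pol hP hPsum hpol hpolsum d t) hB0)
  have habs : Summable (fun t : ℕ => |γ ^ t * inn ((stepDist P pol)^[t] d) w|) := by
    refine Summable.of_norm_bounded hgeo fun t => ?_
    rw [Real.norm_eq_abs, abs_abs]; exact key t
  calc |Gf P pol w γ d| ≤ ∑' t : ℕ, |γ ^ t * inn ((stepDist P pol)^[t] d) w| := by
        rw [Gf]
        have := norm_tsum_le_tsum_norm (f := fun t : ℕ => γ ^ t * inn ((stepDist P pol)^[t] d) w)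
          (by simpa only [Real.norm_eq_abs] using habs)
        simpa only [Real.norm_eq_abs] using this
    _ ≤ ∑' t : ℕ, (B * nrm d) * γ ^ t := Summable.tsum_le_tsum key habs hgeo
    _ = (B * nrm d) * (1 - γ)⁻¹ := by
        rw [tsum_mul_left, tsum_geometric_of_lt_one hγ0 hγ1]

lemma step_add (d e : S → A → ℝ) :
    stepDist P pol (d + e) = stepDist P pol d + stepDist P pol e := by
  funext s' a'
  simp only [stepDist, Pi.add_apply]
  rw [← add_mul]
  congr 1
  rw [← Finset.sum_add_distrib]
  refine Finset.sum_congr rfl fun s _ => ?_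
  rw [← Finset.sum_add_distrib]
  exact Finset.sum_congr rfl fun a _ => by ring

lemma step_smul (c : ℝ) (d : S → A → ℝ) :
    stepDist P pol (c • d) = c • stepDist P pol d := by
  funext s' a'
  simp only [stepDist, Pi.smul_apply, smul_eq_mul]
  have h : (∑ s, ∑ a, c * d s a * P s a s') = c * ∑ s, ∑ a, d s a * P s a s' := by
    rw [Finset.mul_sum]
    refine Finset.sum_congr rfl fun s _ => ?_
    rw [Finset.mul_sum]
    exact Finset.sum_congr rfl fun a _ => by ring
  rw [h, mul_assoc]

lemma step_zero : stepDist P pol (0 : S → A → ℝ) = 0 := by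
  funext s' a'
  simp [stepDist]

lemma iter_add (t : ℕ) (d e : S → A → ℝ) :
    (stepDist P pol)^[t] (d + e) = (stepDist P pol)^[t] d + (stepDist P pol)^[t] e := by
  induction t with
  | zero => simp
  | succ n ih =>
      simp only [Function.iterate_succ_apply', ih, step_add]

lemma iter_smul (t : ℕ) (c : ℝ) (d : S → A → ℝ) :
    (stepDist P pol)^[t] (c • d) = c • (stepDist P pol)^[t] d := by
  induction t with
  | zero => simp
  | succ n ih =>
      simp only [Function.iterate_succ_apply', ih, step_smul]

lemma inn_add (d e w : S → A → ℝ) : inn (d + e) w = inn d w + inn e w := by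
  simp only [inn, Pi.add_apply, ← Finset.sum_add_distrib]
  exact Finset.sum_congr rfl fun s _ => Finset.sum_congr rfl fun a _ => by ring

lemma inn_smul (c : ℝ) (d w : S → A → ℝ) : inn (c • d) w = c * inn d w := by
  simp only [inn, Pi.smul_apply, smul_eq_mul, Finset.mul_sum]
  exact Finset.sum_congr rfl fun s _ => Finset.sum_congr rfl fun a _ => by ring

lemma G_smul (w : S → A → ℝ) (c : ℝ) (d : S → A → ℝ) :
    Gf P pol w γ (c • d) = c * Gf P pol w γ d := by
  rw [Gf, Gf, ← tsum_mul_left]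
  refine tsum_congr fun t => ?_
  rw [iter_smul, inn_smul]
  ring

lemma G_zero (w : S → A → ℝ) : Gf P pol w γ (0 : S → A → ℝ) = 0 := by
  rw [Gf]
  have : ∀ t : ℕ, (stepDist P pol)^[t] (0 : S → A → ℝ) = 0 :=
    fun t => Function.iterate_fixed (step_zero P pol) t
  simp [this, inn]

lemma G_add (hγ0 : 0 ≤ γ) (hγ1 : γ < 1)
    (hP : ∀ s a s', 0 ≤ P s a s') (hPsum : ∀ s a, ∑ s', P s a s' = 1)
    (hpol : ∀ s a, 0 ≤ pol s a) (hpolsum : ∀ s, ∑ a, pol s a = 1)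
    {w : S → A → ℝ} {B : ℝ} (hB0 : 0 ≤ B) (hB : ∀ s a, |w s a| ≤ B) (d e : S → A → ℝ) :
    Gf P pol w γ (d + e) = Gf P pol w γ d + Gf P pol w γ e := by
  rw [Gf, Gf, Gf, ← Summable.tsum_add (summable_G P pol hγ0 hγ1 hP hPsum hpol hpolsum hB0 hB d)
    (summable_G P pol hγ0 hγ1 hP hPsum hpol hpolsum hB0 hB e)]
  refine tsum_congr fun t => ?_
  rw [iter_add, inn_add]
  ring

lemma G_sum {I : Type*} (hγ0 : 0 ≤ γ) (hγ1 : γ < 1)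
    (hP : ∀ s a s', 0 ≤ P s a s') (hPsum : ∀ s a, ∑ s', P s a s' = 1)
    (hpol : ∀ s a, 0 ≤ pol s a) (hpolsum : ∀ s, ∑ a, pol s a = 1)
    {w : S → A → ℝ} {B : ℝ} (hB0 : 0 ≤ B) (hB : ∀ s a, |w s a| ≤ B)
    (u : Finset I) (f : I → S → A → ℝ) :
    Gf P pol w γ (∑ i ∈ u, f i) = ∑ i ∈ u, Gf P pol w γ (f i) := by
  classical
  induction u using Finset.induction_on with
  | empty => simpa using G_zero P pol w
  | insert j u hj ih =>
      rw [Finset.sum_insert hj, Finset.sum_insert hj,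
        G_add P pol hγ0 hγ1 hP hPsum hpol hpolsum hB0 hB, ih]

lemma G_bellman (hγ0 : 0 ≤ γ) (hγ1 : γ < 1)
    (hP : ∀ s a s', 0 ≤ P s a s') (hPsum : ∀ s a, ∑ s', P s a s' = 1)
    (hpol : ∀ s a, 0 ≤ pol s a) (hpolsum : ∀ s, ∑ a, pol s a = 1)
    {w : S → A → ℝ} {B : ℝ} (hB0 : 0 ≤ B) (hB : ∀ s a, |w s a| ≤ B) (d : S → A → ℝ) :
    Gf P pol w γ d = inn d w + γ * Gf P pol w γ (stepDist P pol d) := by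
  rw [Gf, Summable.tsum_eq_zero_add (summable_G P pol hγ0 hγ1 hP hPsum hpol hpolsum hB0 hB d)]
  simp only [pow_zero, one_mul, Function.iterate_zero_apply]
  congr 1
  rw [Gf, ← tsum_mul_left]
  refine tsum_congr fun t => ?_
  rw [Function.iterate_succ_apply]
  ring

lemma step_decomp [DecidableEq S] (Phat : S → A → S → ℝ) (d : S → A → ℝ) :
    stepDist P pol d = stepDist Phat pol d +
      ∑ s'' : S, (∑ s, ∑ a, d s a * (P s a s'' - Phat s a s'')) •
        (fun s' a' => (if s' = s'' then 1 else 0) * pol s' a' : S → A → ℝ) := by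
  funext s' a'
  simp only [Pi.add_apply, Finset.sum_apply, Pi.smul_apply, smul_eq_mul, stepDist]
  have h : ∀ s'' : S,
      (∑ s, ∑ a, d s a * (P s a s'' - Phat s a s'')) * ((if s' = s'' then 1 else 0) * pol s' a')
        = if s' = s'' then
            (∑ s, ∑ a, d s a * (P s a s'' - Phat s a s'')) * pol s' a' else 0 := by
    intro s''; split <;> simp
  rw [Finset.sum_congr rfl fun s'' _ => h s'', Finset.sum_ite_eq]
  simp only [Finset.mem_univ, if_true]
  rw [← add_mul]
  congr 1
  rw [← Finset.sum_add_distrib]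
  refine Finset.sum_congr rfl fun s _ => ?_
  rw [← Finset.sum_add_distrib]
  exact Finset.sum_congr rfl fun a _ => by ring

lemma G_diff [DecidableEq S] (hγ0 : 0 ≤ γ) (hγ1 : γ < 1)
    (hP : ∀ s a s', 0 ≤ P s a s') (hPsum : ∀ s a, ∑ s', P s a s' = 1)
    (hpol : ∀ s a, 0 ≤ pol s a) (hpolsum : ∀ s, ∑ a, pol s a = 1)
    {w : S → A → ℝ} {B : ℝ} (hB0 : 0 ≤ B) (hB : ∀ s a, |w s a| ≤ B)
    (Phat : S → A → S → ℝ) (d : S → A → ℝ) :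
    Gf P pol w γ (stepDist P pol d) =
      Gf P pol w γ (stepDist Phat pol d) +
        ∑ s'' : S, (∑ s, ∑ a, d s a * (P s a s'' - Phat s a s'')) *
          Gf P pol w γ (fun s' a' => (if s' = s'' then 1 else 0) * pol s' a') := by
  rw [step_decomp P pol Phat d,
    G_add P pol hγ0 hγ1 hP hPsum hpol hpolsum hB0 hB,
    G_sum P pol hγ0 hγ1 hP hPsum hpol hpolsum hB0 hB]
  congr 1
  exact Finset.sum_congr rfl fun s'' _ => G_smul P pol w _ _

lemma sum_swap_inn (Phat : S → A → S → ℝ) (V : S → ℝ) (d : S → A → ℝ) :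
    ∑ s'' : S, (∑ s, ∑ a, d s a * (P s a s'' - Phat s a s'')) * V s''
      = inn d (fun s a => ∑ s', (P s a s' - Phat s a s') * V s') := by
  simp only [inn, Finset.sum_mul, Finset.mul_sum]
  rw [Finset.sum_comm]
  refine Finset.sum_congr rfl fun s _ => ?_
  rw [Finset.sum_comm]
  exact Finset.sum_congr rfl fun a _ => Finset.sum_congr rfl fun s'' _ => by ring

end aux

/-- Telescoping performance difference: for two MDPs identical
except for transitions `P` and `P̂`,
`η_M(π) − η_{M̂}(π) = (γ/(1−γ)) E_{(s,a)~ρ̂}[Σ_{s'} (P(s'|s,a) − P̂(s'|s,a)) V^π_M(s')]`. -/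
theorem telescoping_performance_difference
    {S A : Type*} [Fintype S] [Fintype A] [DecidableEq S]
    (P Phat : S → A → S → ℝ) (pol : S → A → ℝ) (ρ0 : S → ℝ)
    (r : S → A → ℝ) (γ Rmax : ℝ)
    (hγ0 : 0 ≤ γ) (hγ1 : γ < 1)
    (hr : ∀ s a, |r s a| ≤ Rmax)
    (hρ0 : ∀ s, 0 ≤ ρ0 s) (hρ0sum : ∑ s, ρ0 s = 1)
    (hpol : ∀ s a, 0 ≤ pol s a) (hpolsum : ∀ s, ∑ a, pol s a = 1)
    (hP : ∀ s a s', 0 ≤ P s a s') (hPsum : ∀ s a, ∑ s', P s a s' = 1)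
    (hPhat : ∀ s a s', 0 ≤ Phat s a s') (hPhatsum : ∀ s a, ∑ s', Phat s a s' = 1) :
    ret P pol ρ0 r γ - ret Phat pol ρ0 r γ
      = (γ / (1 - γ)) * ∑ s, ∑ a, occ Phat pol ρ0 γ s a *
          ∑ s', (P s a s' - Phat s a s') * Vf P pol r γ s' := by
  classical
  have hrB : ∀ s a, |r s a| ≤ |Rmax| := fun s a => (hr s a).trans (le_abs_self _)
  have hR0 : (0:ℝ) ≤ |Rmax| := abs_nonneg _
  have h1γ : (0:ℝ) < 1 - γ := by linarith
  set Xf : S → A → ℝ := fun s a => ∑ s', (P s a s' - Phat s a s') * Vf P pol r γ s' with hXf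
  have hXB : ∀ s a, |Xf s a| ≤ nrm Xf := fun s a => abs_le_nrm Xf s a
  have hX0 : 0 ≤ nrm Xf := nrm_nonneg Xf
  have hd0 : (fun s a => ρ0 s * pol s a) = (fun s a => ρ0 s * pol s a) := rfl
  -- summabilities
  have hs1 : Summable (fun t : ℕ =>
      γ ^ t * inn ((stepDist Phat pol)^[t] (fun s a => ρ0 s * pol s a)) r) :=
    summable_G Phat pol hγ0 hγ1 hPhat hPhatsum hpol hpolsum hR0 hrB _
  have hs2 : Summable (fun t : ℕ =>
      γ ^ t * inn ((stepDist Phat pol)^[t] (fun s a => ρ0 s * pol s a)) Xf) :=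
    summable_G Phat pol hγ0 hγ1 hPhat hPhatsum hpol hpolsum hX0 hXB _
  set f : ℕ → ℝ := fun t =>
    γ ^ t * Gf P pol r γ ((stepDist Phat pol)^[t] (fun s a => ρ0 s * pol s a)) with hfdef
  have hstep : ∀ t : ℕ, f t - f (t+1)
      = γ ^ t * inn ((stepDist Phat pol)^[t] (fun s a => ρ0 s * pol s a)) r
        + γ * (γ ^ t * inn ((stepDist Phat pol)^[t] (fun s a => ρ0 s * pol s a)) Xf) := by
    intro t
    have hb := G_bellman P pol hγ0 hγ1 hP hPsum hpol hpolsum hR0 hrB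
      ((stepDist Phat pol)^[t] (fun s a => ρ0 s * pol s a))
    have hdq : Gf P pol r γ
          (stepDist P pol ((stepDist Phat pol)^[t] (fun s a => ρ0 s * pol s a)))
        = Gf P pol r γ
            (stepDist Phat pol ((stepDist Phat pol)^[t] (fun s a => ρ0 s * pol s a)))
          + inn ((stepDist Phat pol)^[t] (fun s a => ρ0 s * pol s a)) Xf := by
      rw [G_diff P pol hγ0 hγ1 hP hPsum hpol hpolsum hR0 hrB Phat]
      congr 1
      rw [hXf, ← sum_swap_inn P Phat (Vf P pol r γ)]
      refine Finset.sum_congr rfl fun s'' _ => ?_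
      congr 1
    simp only [hfdef]
    rw [Function.iterate_succ_apply', hb, hdq]
    ring
  have htel : Summable (fun t : ℕ => f t - f (t + 1)) :=
    (hs1.add (hs2.mul_left γ)).congr fun t => (hstep t).symm
  have hften : Filter.Tendsto f Filter.atTop (nhds 0) := by
    have hC : ∀ t : ℕ,
        ‖f t‖ ≤ ((|Rmax| * nrm (fun s a => ρ0 s * pol s a)) * (1 - γ)⁻¹) * γ ^ t := by
      intro t
      simp only [hfdef]
      rw [Real.norm_eq_abs, abs_mul, abs_pow, abs_of_nonneg hγ0, mul_comm]
      refine mul_le_mul_of_nonneg_right ?_ (pow_nonneg hγ0 t)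
      refine (G_abs_le P pol hγ0 hγ1 hP hPsum hpol hpolsum hR0 hrB _).trans ?_
      have hit := nrm_iter Phat pol hPhat hPhatsum hpol hpolsum (fun s a => ρ0 s * pol s a) t
      have h2 : (0:ℝ) ≤ (1 - γ)⁻¹ := le_of_lt (inv_pos.mpr h1γ)
      exact mul_le_mul_of_nonneg_right (mul_le_mul_of_nonneg_left hit hR0) h2
    have hlim : Filter.Tendsto
        (fun t : ℕ => ((|Rmax| * nrm (fun s a => ρ0 s * pol s a)) * (1 - γ)⁻¹) * γ ^ t)
        Filter.atTop (nhds 0) := by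
      simpa using (tendsto_pow_atTop_nhds_zero_of_lt_one hγ0 hγ1).const_mul
        ((|Rmax| * nrm (fun s a => ρ0 s * pol s a)) * (1 - γ)⁻¹)
    exact squeeze_zero_norm hC hlim
  have hhs : HasSum (fun t : ℕ => f t - f (t + 1)) (f 0) := by
    rw [htel.hasSum_iff_tendsto_nat]
    refine Filter.Tendsto.congr (fun n => (Finset.sum_range_sub' f n).symm) ?_
    simpa using tendsto_const_nhds.sub hften
  have hkey : Gf P pol r γ (fun s a => ρ0 s * pol s a)
      = (∑' t : ℕ, γ ^ t * inn ((stepDist Phat pol)^[t] (fun s a => ρ0 s * pol s a)) r)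
        + γ * ∑' t : ℕ, γ ^ t * inn ((stepDist Phat pol)^[t] (fun s a => ρ0 s * pol s a)) Xf := by
    have h0 : f 0 = Gf P pol r γ (fun s a => ρ0 s * pol s a) := by
      simp [hfdef]
    rw [← h0, ← hhs.tsum_eq, tsum_congr hstep, Summable.tsum_add hs1 (hs2.mul_left γ), tsum_mul_left]
  -- identify ret with Gf
  have hret1 : ret P pol ρ0 r γ = Gf P pol r γ (fun s a => ρ0 s * pol s a) := rfl
  have hret2 : ret Phat pol ρ0 r γ
      = ∑' t : ℕ, γ ^ t * inn ((stepDist Phat pol)^[t] (fun s a => ρ0 s * pol s a)) r := rfl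
  -- rewrite RHS occupancy sum
  have hsa : ∀ s a, Summable (fun t : ℕ =>
      γ ^ t * traj Phat pol ρ0 t s a * Xf s a) := by
    intro s a
    refine Summable.of_norm_bounded
      (g := fun t => (nrm (fun s a => ρ0 s * pol s a) * |Xf s a|) * γ ^ t)
      ((summable_geometric_of_lt_one hγ0 hγ1).mul_left _) fun t => ?_
    rw [Real.norm_eq_abs, abs_mul, abs_mul, abs_pow, abs_of_nonneg hγ0]
    have h1 : |traj Phat pol ρ0 t s a| ≤ nrm (fun s a => ρ0 s * pol s a) :=
      (abs_le_nrm (traj Phat pol ρ0 t) s a).trans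
        (nrm_iter Phat pol hPhat hPhatsum hpol hpolsum (fun s a => ρ0 s * pol s a) t)
    calc γ ^ t * |traj Phat pol ρ0 t s a| * |Xf s a|
        ≤ γ ^ t * nrm (fun s a => ρ0 s * pol s a) * |Xf s a| :=
          mul_le_mul_of_nonneg_right
            (mul_le_mul_of_nonneg_left h1 (pow_nonneg hγ0 t)) (abs_nonneg _)
      _ = (nrm (fun s a => ρ0 s * pol s a) * |Xf s a|) * γ ^ t := by ring
  have hRHS : ∑ s, ∑ a, occ Phat pol ρ0 γ s a * Xf s a
      = (1 - γ) * ∑' t : ℕ,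
          γ ^ t * inn ((stepDist Phat pol)^[t] (fun s a => ρ0 s * pol s a)) Xf := by
    calc ∑ s, ∑ a, occ Phat pol ρ0 γ s a * Xf s a
        = ∑ s, ∑ a, (1 - γ) * ∑' t : ℕ, γ ^ t * traj Phat pol ρ0 t s a * Xf s a := by
          refine Finset.sum_congr rfl fun s _ => Finset.sum_congr rfl fun a _ => ?_
          simp only [occ]
          rw [mul_assoc, ← tsum_mul_right]
      _ = (1 - γ) * ∑ s, ∑ a, ∑' t : ℕ, γ ^ t * traj Phat pol ρ0 t s a * Xf s a := by
          simp only [← Finset.mul_sum]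
      _ = (1 - γ) * ∑' t : ℕ, ∑ s, ∑ a, γ ^ t * traj Phat pol ρ0 t s a * Xf s a := by
          congr 1
          rw [Summable.tsum_finsetSum fun s _ => summable_sum fun a _ => hsa s a]
          exact Finset.sum_congr rfl fun s _ => (Summable.tsum_finsetSum fun a _ => hsa s a).symm
      _ = (1 - γ) * ∑' t : ℕ,
            γ ^ t * inn ((stepDist Phat pol)^[t] (fun s a => ρ0 s * pol s a)) Xf := by
          congr 1
          refine tsum_congr fun t => ?_
          rw [inn, Finset.mul_sum]
          refine Finset.sum_congr rfl fun s _ => ?_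
          rw [Finset.mul_sum]
          refine Finset.sum_congr rfl fun a _ => ?_
          rw [mul_assoc]
          rfl
  show ret P pol ρ0 r γ - ret Phat pol ρ0 r γ
      = (γ / (1 - γ)) * ∑ s, ∑ a, occ Phat pol ρ0 γ s a * Xf s a
  rw [hret1, hret2, hkey, hRHS]
  have hne : (1:ℝ) - γ ≠ 0 := ne_of_gt h1γ
  field_simp
  ring
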